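/- Fix c₀ ∈ ℝ and α > 0. For every r ∈ (0, 1/2) there exists δ > 0 such that for every c with |c − c₀| < δ and every positive solution z of ż = c g(u) − f(u) − h(u)/z^α defined on all of (0,1), one has z(u) ≥ δ for every u ∈ [r, 1−r]. -/

import Mathlib

open Set Filter Topology Real

set_option maxHeartbeats 1000000 in
/-- Uniform lower bound on compact subintervals: for every `r ∈ (0,1/2)` there is
`δ > 0` such that every positive solution on `(0,1)` of the equation with speed
`c`, `|c − c₀| < δ`, satisfies `z(u) ≥ δ` on `[r, 1−r]`. -/
theorem stmt_12 (α c₀ : ℝ) (hα : 0 < α) (f g h : ℝ → ℝ)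
    (hf : ContinuousOn f (Icc 0 1)) (hg : ContinuousOn g (Icc 0 1))
    (hh : ContinuousOn h (Icc 0 1))
    (hh0 : h 0 = 0) (hh1 : h 1 = 0) (hhpos : ∀ u ∈ Ioo (0:ℝ) 1, 0 < h u) :
    ∀ r ∈ Ioo (0:ℝ) (1/2), ∃ δ > 0, ∀ c : ℝ, |c - c₀| < δ →
      ∀ z : ℝ → ℝ,
        (∀ u ∈ Ioo (0:ℝ) 1, HasDerivAt z (c * g u - f u - h u / z u ^ α) u) →
        (∀ u ∈ Ioo (0:ℝ) 1, 0 < z u) →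
        ∀ u ∈ Icc r (1 - r), δ ≤ z u := by
  rintro r ⟨hr0, hr2⟩
  have hsub : Icc r (1 - r/4) ⊆ Ioo (0:ℝ) 1 := fun x hx =>
    ⟨lt_of_lt_of_le hr0 hx.1, lt_of_le_of_lt hx.2 (by linarith)⟩
  have hne : r ≤ 1 - r/4 := by linarith
  -- minimum of h on the compact interval
  obtain ⟨m, hm0, hmle⟩ : ∃ m : ℝ, 0 < m ∧ ∀ x ∈ Icc r (1 - r/4), m ≤ h x := by
    obtain ⟨u₁, hu₁, hmin⟩ :=
      isCompact_Icc.exists_isMinOn (nonempty_Icc.2 hne)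
        (hh.mono (hsub.trans Ioo_subset_Icc_self))
    exact ⟨h u₁, hhpos u₁ (hsub hu₁), fun x hx => hmin hx⟩
  -- uniform bound on the right-hand side without the h-term
  obtain ⟨C, hC0, hcC⟩ : ∃ C : ℝ, 0 ≤ C ∧ ∀ c : ℝ, |c - c₀| ≤ 1 →
      ∀ v ∈ Icc (0:ℝ) 1, c * g v - f v ≤ C := by
    obtain ⟨F, hF⟩ := isCompact_Icc.exists_bound_of_continuousOn hf
    obtain ⟨G, hG⟩ := isCompact_Icc.exists_bound_of_continuousOn hg
    have hG0 : 0 ≤ G := le_trans (norm_nonneg _) (hG 0 ⟨le_refl _, by norm_num⟩)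
    have hF0 : 0 ≤ F := le_trans (norm_nonneg _) (hF 0 ⟨le_refl _, by norm_num⟩)
    refine ⟨(|c₀| + 1) * G + F, by positivity, ?_⟩
    intro c hc v hv
    have h1 : |c| ≤ |c₀| + 1 := by
      have h2 := abs_sub_abs_le_abs_sub c c₀
      linarith
    have hgv : |g v| ≤ G := by simpa [Real.norm_eq_abs] using hG v hv
    have hfv : |f v| ≤ F := by simpa [Real.norm_eq_abs] using hF v hv
    have h2 : c * g v ≤ (|c₀|+1) * G := by
      calc c * g v ≤ |c * g v| := le_abs_self _
      _ = |c| * |g v| := abs_mul _ _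
      _ ≤ (|c₀|+1) * G := mul_le_mul h1 hgv (abs_nonneg _) (by positivity)
    have h3 : - f v ≤ F := le_trans (neg_le_abs _) hfv
    linarith
  -- small constants
  obtain ⟨ε, hε0, hεα⟩ : ∃ ε : ℝ, 0 < ε ∧ ε ^ α ≤ m / (2*(C+1)) := by
    refine ⟨min 1 ((m / (2*(C+1))) ^ (1/α)),
      lt_min one_pos (Real.rpow_pos_of_pos (by positivity) _), ?_⟩
    calc (min 1 ((m / (2*(C+1))) ^ (1/α))) ^ α
        ≤ ((m / (2*(C+1))) ^ (1/α)) ^ α :=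
          Real.rpow_le_rpow (le_min zero_le_one (Real.rpow_pos_of_pos (by positivity) _).le)
            (min_le_right _ _) hα.le
    _ = m / (2*(C+1)) := by
          rw [← Real.rpow_mul (by positivity), one_div, inv_mul_cancel₀ hα.ne',
            Real.rpow_one]
  obtain ⟨η, hη0, hηr, hηε⟩ : ∃ η : ℝ, 0 < η ∧ η ≤ 3*r/4 ∧ η * (2*(C+1)) ≤ ε := by
    refine ⟨min (3*r/4) (ε/(2*(C+1))), lt_min (by linarith) (by positivity),
      min_le_left _ _, ?_⟩
    have h1 : ε/(2*(C+1)) * (2*(C+1)) = ε := by field_simp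
    calc min (3*r/4) (ε/(2*(C+1))) * (2*(C+1))
        ≤ ε/(2*(C+1)) * (2*(C+1)) :=
          mul_le_mul_of_nonneg_right (min_le_right _ _) (by positivity)
    _ = ε := h1
  obtain ⟨δ, hδ0, hδ1, hδε, hδpow⟩ :
      ∃ δ : ℝ, 0 < δ ∧ δ ≤ 1 ∧ δ ≤ ε/2 ∧ δ ^ (α+1) ≤ (α+1)*m*η/4 := by
    refine ⟨min (min 1 (ε/2)) (((α+1)*m*η/4) ^ (1/(α+1))),
      lt_min (lt_min one_pos (by positivity)) (Real.rpow_pos_of_pos (by positivity) _),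
      le_trans (min_le_left _ _) (min_le_left _ _),
      le_trans (min_le_left _ _) (min_le_right _ _), ?_⟩
    have hδnn : (0:ℝ) ≤ min (min 1 (ε/2)) (((α+1)*m*η/4) ^ (1/(α+1))) :=
      le_min (le_min zero_le_one (by positivity)) (Real.rpow_pos_of_pos (by positivity) _).le
    calc (min (min 1 (ε/2)) (((α+1)*m*η/4) ^ (1/(α+1)))) ^ (α+1)
        ≤ ((((α+1)*m*η/4) ^ (1/(α+1)))) ^ (α+1) :=
          Real.rpow_le_rpow hδnn (min_le_right _ _) (by linarith)
    _ = (α+1)*m*η/4 := by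
          rw [← Real.rpow_mul (by positivity), one_div,
            inv_mul_cancel₀ (by linarith : α + 1 ≠ 0), Real.rpow_one]
  refine ⟨δ, hδ0, ?_⟩
  intro c hc z hz hzpos u₀ hu₀
  by_contra hcon
  push_neg at hcon
  have hcC' : ∀ v ∈ Icc (0:ℝ) 1, c * g v - f v ≤ C :=
    hcC c (le_of_lt (lt_of_lt_of_le hc hδ1))
  obtain ⟨b, hbdef⟩ : ∃ b : ℝ, b = u₀ + η := ⟨_, rfl⟩
  have hu₀b : u₀ ≤ b := by rw [hbdef]; linarith
  have hIsub : Icc u₀ b ⊆ Icc r (1 - r/4) := by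
    intro x hx
    have h4 := hx.1
    have h5 := hx.2
    rw [hbdef] at h5
    exact ⟨by linarith [hu₀.1], by linarith [hu₀.2]⟩
  have hIoo : Icc u₀ b ⊆ Ioo (0:ℝ) 1 := hIsub.trans hsub
  have hI01 : Icc u₀ b ⊆ Icc (0:ℝ) 1 := fun x hx => Ioo_subset_Icc_self (hIoo hx)
  have hzc : ContinuousOn z (Icc u₀ b) := fun x hx =>
    ((hz x (hIoo hx)).continuousAt).continuousWithinAt
  -- step 1: z stays below ε on [u₀, b]
  have hψ : AntitoneOn (fun a => z a - C * a) (Icc u₀ b) := by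
    have hd : ∀ x ∈ Ioo u₀ b,
        HasDerivAt (fun a => z a - C * a) (c * g x - f x - h x / z x ^ α - C) x := by
      intro x hx
      have hx' := hIoo (Ioo_subset_Icc_self hx)
      have := (hz x hx').sub ((hasDerivAt_id x).const_mul C)
      simp only [mul_one] at this; exact this
    apply antitoneOn_of_deriv_nonpos (convex_Icc _ _)
    · exact hzc.sub (continuousOn_const.mul continuousOn_id)
    · intro x hx
      rw [interior_Icc] at hx
      exact (hd x hx).differentiableAt.differentiableWithinAt
    · intro x hx
      rw [interior_Icc] at hx
      have hxI : x ∈ Icc u₀ b := Ioo_subset_Icc_self hx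
      rw [(hd x hx).deriv]
      have h1 : c * g x - f x ≤ C := hcC' x (hI01 hxI)
      have h2 : 0 ≤ h x / z x ^ α :=
        div_nonneg (le_trans hm0.le (hmle x (hIsub hxI)))
          (Real.rpow_pos_of_pos (hzpos x (hIoo hxI)) α).le
      linarith
  have hzε : ∀ x ∈ Icc u₀ b, z x ≤ ε := by
    intro x hx
    have h1 := hψ (left_mem_Icc.2 hu₀b) hx hx.1
    simp only at h1
    have h3 : x - u₀ ≤ η := by
      have h5 := hx.2; rw [hbdef] at h5; linarith
    have h4 : C * (x - u₀) ≤ C * η := mul_le_mul_of_nonneg_left h3 hC0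
    nlinarith [hcon, hδε, hη0.le]
  -- step 2: the power function decreases at a definite rate
  have hφd : ∀ x ∈ Ioo u₀ b, HasDerivAt (fun a => z a ^ (α+1) + ((α+1)*m/2) * a)
      ((c * g x - f x - h x / z x ^ α) * (α+1) * z x ^ α + (α+1)*m/2) x := by
    intro x hx
    have hx' := hIoo (Ioo_subset_Icc_self hx)
    have hp := (hz x hx').rpow_const (p := α+1) (Or.inl (hzpos x hx').ne')
    have he : α + 1 - 1 = α := by ring
    rw [he] at hp
    have := hp.add ((hasDerivAt_id x).const_mul ((α+1)*m/2))
    simp only [mul_one] at this; exact this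
  have hφ : AntitoneOn (fun a => z a ^ (α+1) + ((α+1)*m/2) * a) (Icc u₀ b) := by
    apply antitoneOn_of_deriv_nonpos (convex_Icc _ _)
    · have hc1 : ContinuousOn (fun a => z a ^ (α+1)) (Icc u₀ b) := by
        apply ContinuousOn.rpow_const hzc
        intro x hx
        exact Or.inl (hzpos x (hIoo hx)).ne'
      exact hc1.add (continuousOn_const.mul continuousOn_id)
    · intro x hx
      rw [interior_Icc] at hx
      exact (hφd x hx).differentiableAt.differentiableWithinAt
    · intro x hx
      rw [interior_Icc] at hx
      have hxI : x ∈ Icc u₀ b := Ioo_subset_Icc_self hx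
      rw [(hφd x hx).deriv]
      have hzx : 0 < z x := hzpos x (hIoo hxI)
      have hP : 0 < z x ^ α := Real.rpow_pos_of_pos hzx α
      have h1 : c * g x - f x ≤ C := hcC' x (hI01 hxI)
      have h2 : m ≤ h x := hmle x (hIsub hxI)
      have h3 : z x ^ α ≤ ε ^ α := Real.rpow_le_rpow hzx.le (hzε x hxI) hα.le
      have h4 : z x ^ α * (c * g x - f x - h x / z x ^ α)
          = z x ^ α * (c * g x - f x) - h x := by
        field_simp
      have h5 : z x ^ α * (c * g x - f x) ≤ z x ^ α * C :=
        mul_le_mul_of_nonneg_left h1 hP.le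
      have h6 : z x ^ α * C ≤ ε ^ α * C := mul_le_mul_of_nonneg_right h3 hC0
      have h7 : ε ^ α * (2*(C+1)) ≤ m := by
        calc ε ^ α * (2*(C+1)) ≤ m / (2*(C+1)) * (2*(C+1)) :=
              mul_le_mul_of_nonneg_right hεα (by positivity)
        _ = m := by field_simp
      have hεP : 0 < ε ^ α := Real.rpow_pos_of_pos hε0 α
      have h8 : ε ^ α * C ≤ m / 2 := by nlinarith
      have h9 : z x ^ α * (c * g x - f x - h x / z x ^ α) ≤ m/2 - m := by
        rw [h4]; linarith
      have h10 : (c * g x - f x - h x / z x ^ α) * (α+1) * z x ^ α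
          = (α+1) * (z x ^ α * (c * g x - f x - h x / z x ^ α)) := by ring
      rw [h10]
      have h11 : (α+1) * (z x ^ α * (c * g x - f x - h x / z x ^ α))
          ≤ (α+1) * (m/2 - m) := mul_le_mul_of_nonneg_left h9 (by linarith)
      nlinarith
  -- contradiction
  have hmono := hφ (left_mem_Icc.2 hu₀b) (right_mem_Icc.2 hu₀b) hu₀b
  simp only at hmono
  have hu₀Ioo : u₀ ∈ Ioo (0:ℝ) 1 := hIoo (left_mem_Icc.2 hu₀b)
  have hbIoo : b ∈ Ioo (0:ℝ) 1 := hIoo (right_mem_Icc.2 hu₀b)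
  have h1 : z u₀ ^ (α+1) ≤ δ ^ (α+1) :=
    Real.rpow_le_rpow (hzpos u₀ hu₀Ioo).le hcon.le (by linarith)
  have h2 : 0 < z b ^ (α+1) := Real.rpow_pos_of_pos (hzpos b hbIoo) _
  have h3 : (α+1)*m/2 * b - (α+1)*m/2 * u₀ = (α+1)*m/2 * η := by rw [hbdef]; ring
  have h4 : 0 < (α+1) * m * η :=
    mul_pos (mul_pos (by linarith : (0:ℝ) < α+1) hm0) hη0
  nlinarith [h1, h2, h3, hmono, hδpow, h4]
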